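/- arXiv:1809.10123 — 2 statements merged into one kernel-verified Lean document; each statement's English description precedes it below -/
import Mathlib

section
/- Let f : ℝ → ℝ be continuous with f(s) > 0 for all s ∈ [0,T], where T > 0. Let M be the running maximum of f on [0,T], extended constantly outside [0,T], with Lebesgue–Stieltjes measure μ_M (note M(s) > 0 on [0,T]). Then for every t ∈ [0,T]: ∫_{(0,t]} ( f(s) / M(s) ) dμ_M(s) = M(t) − M(0). -/
open MeasureTheory

/-- The running maximum of `f` on `[0, T]`, extended constantly outside `[0, T]`. -/
noncomputable def runMax (f : ℝ → ℝ) (T t : ℝ) : ℝ :=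
  sSup (f '' Set.Icc (0:ℝ) (max 0 (min t T)))

lemma runMax_bddAbove (f : ℝ → ℝ) (T : ℝ) (hf : Continuous f) (t : ℝ) :
    BddAbove (f '' Set.Icc (0:ℝ) (max 0 (min t T))) :=
  (isCompact_Icc.image hf).bddAbove

lemma runMax_nonempty (f : ℝ → ℝ) (T t : ℝ) :
    (f '' Set.Icc (0:ℝ) (max 0 (min t T))).Nonempty :=
  ⟨f 0, 0, ⟨le_refl _, le_max_left _ _⟩, rfl⟩

lemma runMax_mono (f : ℝ → ℝ) (T : ℝ) (hf : Continuous f) : Monotone (runMax f T) := by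
  intro a b hab
  refine csSup_le_csSup (runMax_bddAbove f T hf b) (runMax_nonempty f T a)
    (Set.image_mono (Set.Icc_subset_Icc le_rfl ?_))
  exact max_le_max le_rfl (min_le_min hab le_rfl)

lemma clamp_eq (T : ℝ) {s : ℝ} (hs : s ∈ Set.Icc (0:ℝ) T) : max 0 (min s T) = s := by
  rw [min_eq_left hs.2, max_eq_right hs.1]

lemma le_runMax (f : ℝ → ℝ) (T : ℝ) (hf : Continuous f) {s u : ℝ}
    (hs : s ∈ Set.Icc (0:ℝ) T) (hu : u ∈ Set.Icc (0:ℝ) s) : f u ≤ runMax f T s := by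
  refine le_csSup (runMax_bddAbove f T hf s) ⟨u, ?_, rfl⟩
  rwa [clamp_eq T hs]

lemma runMax_pos (f : ℝ → ℝ) (T : ℝ) (hf : Continuous f) (hT : 0 < T)
    (hfpos : ∀ s ∈ Set.Icc (0:ℝ) T, 0 < f s) (t : ℝ) : 0 < runMax f T t := by
  have h0 : f 0 ≤ runMax f T t :=
    le_csSup (runMax_bddAbove f T hf t) ⟨0, ⟨le_rfl, le_max_left _ _⟩, rfl⟩
  exact lt_of_lt_of_le (hfpos 0 ⟨le_rfl, hT.le⟩) h0

lemma exists_runMax_eq (f : ℝ → ℝ) (T : ℝ) (hf : Continuous f) {s : ℝ}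
    (hs : s ∈ Set.Icc (0:ℝ) T) : ∃ u ∈ Set.Icc (0:ℝ) s, f u = runMax f T s := by
  obtain ⟨u, hu, hmax⟩ :=
    isCompact_Icc.exists_isMaxOn (Set.nonempty_Icc.2 hs.1) hf.continuousOn
  refine ⟨u, hu, le_antisymm (le_runMax f T hf hs hu) ?_⟩
  rw [runMax, clamp_eq T hs]
  exact csSup_le ((Set.nonempty_Icc.2 hs.1).image f) (by rintro y ⟨w, hw, rfl⟩; exact hmax hw)

/-- For a continuous positive `f` with running maximum `M`,
`∫_{(0,t]} (f(s)/M(s)) dM(s) = M(t) − M(0)` (Gamma functional of Example 6.2). -/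
theorem integral_ratio_wrt_runMax
    (f : ℝ → ℝ) (hf : Continuous f) (T : ℝ) (hT : 0 < T)
    (hfpos : ∀ s ∈ Set.Icc (0:ℝ) T, 0 < f s)
    (μM : Measure ℝ)
    (hμM : ∀ a b : ℝ, a ≤ b →
      μM (Set.Ioc a b) = ENNReal.ofReal (runMax f T b - runMax f T a)) :
    ∀ t ∈ Set.Icc (0:ℝ) T,
      ∫ s in Set.Ioc (0:ℝ) t, f s / runMax f T s ∂μM
        = runMax f T t - runMax f T 0 := by
  intro t ht
  set M := runMax f T with hM
  have hMono : Monotone M := runMax_mono f T hf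
  -- the exceptional set is null
  set A : Set ℝ := {s | s ∈ Set.Ioc (0:ℝ) t ∧ f s ≠ M s} with hAdef
  have hA : μM A = 0 := by
    apply measure_null_of_locally_null
    rintro s ⟨hs1, hsne⟩
    have hsT : s ∈ Set.Icc (0:ℝ) T := ⟨hs1.1.le, hs1.2.trans ht.2⟩
    have hlt : f s < M s :=
      lt_of_le_of_ne (le_runMax f T hf hsT ⟨hsT.1, le_rfl⟩) hsne
    obtain ⟨u, hu, hfu⟩ := exists_runMax_eq f T hf hsT
    have hus : u < s := by
      rcases lt_or_eq_of_le hu.2 with h | h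
      · exact h
      · exact absurd (h ▸ hfu) hsne
    have hMu : M u = M s := by
      refine le_antisymm (hMono hu.2) ?_
      rw [show M s = f u from hfu.symm]
      exact le_runMax f T hf ⟨hu.1, hu.2.trans hsT.2⟩ ⟨hu.1, le_rfl⟩
    obtain ⟨ε, hε, hball⟩ := Metric.isOpen_iff.1 (isOpen_lt hf continuous_const) s hlt
    set δ : ℝ := min (ε / 2) ((s - u) / 2) with hδdef
    have hδpos : 0 < δ := lt_min (by linarith) (by linarith)
    have hδε : δ < ε := lt_of_le_of_lt (min_le_left _ _) (by linarith)
    have hδu : u ≤ s - δ := by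
      have : δ ≤ (s - u) / 2 := min_le_right _ _
      linarith
    have key : ∀ v ∈ Set.Icc (s - δ) (s + δ), M v = M s := by
      intro v hv
      refine le_antisymm ?_ (hMu ▸ hMono (hδu.trans hv.1))
      refine csSup_le (runMax_nonempty f T v) ?_
      rintro y ⟨w, hw, rfl⟩
      have hw0 : 0 ≤ w := hw.1
      have hδs : δ < s := by
        have h1 : δ ≤ (s - u) / 2 := min_le_right _ _
        have := hu.1
        linarith [hs1.1]
      have hv0 : 0 ≤ v := le_trans (by linarith : (0:ℝ) ≤ s - δ) hv.1
      have hwT : w ≤ T := le_trans hw.2 (max_le hT.le (min_le_right v T))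
      have hwv : w ≤ v := le_trans hw.2 (max_le hv0 (min_le_left v T))
      rcases le_or_gt w s with h | h
      · exact le_runMax f T hf hsT ⟨hw0, h⟩
      · have : w ∈ Metric.ball s ε := by
          rw [Metric.mem_ball, Real.dist_eq, abs_of_pos (by linarith)]
          have : w ≤ s + δ := hwv.trans hv.2
          linarith
        exact (hball this).le
    refine ⟨Set.Ioo (s - δ) (s + δ),
      mem_nhdsWithin_of_mem_nhds (Ioo_mem_nhds (by linarith) (by linarith)), ?_⟩
    have h0 : μM (Set.Ioc (s - δ) (s + δ)) = 0 := by
      rw [hμM _ _ (by linarith),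
        key (s + δ) ⟨by linarith, le_rfl⟩, key (s - δ) ⟨le_rfl, by linarith⟩,
        sub_self, ENNReal.ofReal_zero]
    exact measure_mono_null Set.Ioo_subset_Ioc_self h0
  have hAe : ∀ᵐ s ∂μM, s ∉ A := by
    rw [ae_iff]
    simpa using hA
  have hcongr : ∫ s in Set.Ioc (0:ℝ) t, f s / M s ∂μM
      = ∫ _ in Set.Ioc (0:ℝ) t, (1:ℝ) ∂μM := by
    refine setIntegral_congr_ae measurableSet_Ioc ?_
    filter_upwards [hAe] with s hsA hsIoc
    have hfs : f s = M s := by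
      by_contra h
      exact hsA ⟨hsIoc, h⟩
    rw [hfs, div_self (ne_of_gt (runMax_pos f T hf hT hfpos s))]
  rw [hcongr, setIntegral_const, measureReal_def, hμM 0 t ht.1, smul_eq_mul, mul_one,
    ENNReal.toReal_ofReal (sub_nonneg.2 (hMono ht.1))]
end

section
/- Let r > 0, d ≥ 1, and let μ_1, …, μ_d : [0,T] → (0,1] be continuous with Σ_{i=1}^d μ_i(t) = 1 for all t ∈ [0,T] and μ_i(0) ≤ 1/(r e) for every i; let m_i(t) := min_{0 ≤ s ≤ t} μ_i(s). With li_r(x) := ∫_0^x du/log(ru), set κ := −1 − Σ_i li_r(μ_i(0)), p := −log( max_i { −r μ_i(0) log(r μ_i(0)) } ) + κ, Γ(t) := Σ_i ( m_i(t) − μ_i(0) + li_r(m_i(t)) − li_r(μ_i(0)) ), and V(t) := −p − Σ_i μ_i(t) log( −r m_i(t) log(r m_i(t)) ) + Γ(t). Fix 0 < T* ≤ T and assume −log( max_{1 ≤ i ≤ d} { −r m_i(T*) log(r m_i(T*)) } ) > −Σ_{i=1}^d μ_i(0) log( −r μ_i(0) log(r μ_i(0)) ) − κ. Then V(t) ≥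 0 for all t ∈ [0,T], and V(t) > V(0) for every t ∈ [T*, T]. (Example 6.4: the strategy additively generated by the iterated entropy functional with running minimum is strong arbitrage relative to the market over every horizon [0,t] with T* ≤ t ≤ T.) -/
/-- The running minimum of `f` on `[0, t]`. -/
noncomputable def runMin (f : ℝ → ℝ) (t : ℝ) : ℝ :=
  sInf (f '' Set.Icc (0:ℝ) t)

/-- `li_r(x) := ∫_0^x du / log(ru)`. -/
noncomputable def lir (r x : ℝ) : ℝ :=
  ∫ u in (0:ℝ)..x, (Real.log (r * u))⁻¹

lemma log_le_neg_one {y : ℝ} (hy : 0 < y) (hy' : y ≤ (Real.exp 1)⁻¹) : Real.log y ≤ -1 := by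
  have := Real.log_le_log hy hy'
  rwa [Real.log_inv, Real.log_exp] at this

lemma neg_mul_log_mono {a b : ℝ} (ha : 0 < a) (hab : a ≤ b) (hb : b ≤ (Real.exp 1)⁻¹) :
    -a * Real.log a ≤ -b * Real.log b := by
  have hmono : MonotoneOn (fun y : ℝ => -(y * Real.log y)) (Set.Icc a b) := by
    apply monotoneOn_of_deriv_nonneg (convex_Icc a b)
    · exact (continuousOn_id.mul (Real.continuousOn_log.mono (by
        intro y hy
        simp only [Set.mem_compl_iff, Set.mem_singleton_iff]
        exact ne_of_gt (lt_of_lt_of_le ha hy.1)))).neg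
    · intro y hy
      rw [interior_Icc] at hy
      exact ((Real.hasDerivAt_mul_log (ne_of_gt (ha.trans hy.1))).neg).differentiableAt.differentiableWithinAt
    · intro y hy
      rw [interior_Icc] at hy
      have h1 : deriv (fun y : ℝ => -(y * Real.log y)) y = -(Real.log y + 1) :=
        ((Real.hasDerivAt_mul_log (ne_of_gt (ha.trans hy.1))).neg).deriv
      rw [h1]
      have : Real.log y ≤ -1 := log_le_neg_one (ha.trans hy.1) (le_of_lt (hy.2.trans_le hb))
      linarith
  have := hmono (Set.left_mem_Icc.2 hab) (Set.right_mem_Icc.2 hab) hab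
  simpa [neg_mul] using this

lemma neg_mul_log_pos {y : ℝ} (hy : 0 < y) (hy' : y ≤ (Real.exp 1)⁻¹) :
    0 < -y * Real.log y := by
  have h := log_le_neg_one hy hy'
  nlinarith

lemma lir_intervalIntegrable {r x : ℝ} (hr : 0 < r) (hx : 0 ≤ x) (hx' : r * x ≤ (Real.exp 1)⁻¹) :
    IntervalIntegrable (fun u => (Real.log (r * u))⁻¹) MeasureTheory.volume 0 x := by
  rw [intervalIntegrable_iff, Set.uIoc_of_le hx]
  apply MeasureTheory.Integrable.mono' (g := fun _ => (1:ℝ))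
    (MeasureTheory.integrableOn_const measure_Ioc_lt_top.ne (by simp))
  · exact ((Real.measurable_log.comp (measurable_const_mul r)).inv).aestronglyMeasurable
  · refine (MeasureTheory.ae_restrict_iff' measurableSet_Ioc).2 (Filter.Eventually.of_forall ?_)
    intro u hu
    have hru : 0 < r * u := mul_pos hr hu.1
    have hle : r * u ≤ (Real.exp 1)⁻¹ := le_trans (by nlinarith [hu.2]) hx'
    have hlog : Real.log (r * u) ≤ -1 := log_le_neg_one hru hle
    have hlogneg : Real.log (r * u) < 0 := by linarith
    have h1 : Real.log (r * u) * (Real.log (r * u))⁻¹ = 1 := mul_inv_cancel₀ hlogneg.ne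
    have h2 : (Real.log (r * u))⁻¹ < 0 := inv_lt_zero.2 hlogneg
    rw [Real.norm_eq_abs, abs_of_neg h2]
    nlinarith

lemma lir_ge {r x : ℝ} (hr : 0 < r) (hx : 0 ≤ x) (hx' : r * x ≤ (Real.exp 1)⁻¹) :
    -x ≤ lir r x := by
  have hint := lir_intervalIntegrable hr hx hx'
  have hmono := intervalIntegral.integral_mono_on (f := fun _ => (-1 : ℝ))
    (g := fun u => (Real.log (r * u))⁻¹) hx intervalIntegrable_const hint ?_
  · calc -x = ∫ u in (0:ℝ)..x, (-1 : ℝ) := by simp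
      _ ≤ lir r x := hmono
  · intro u hu
    rcases eq_or_lt_of_le hu.1 with h | h
    · simp [← h]
    · have hru : 0 < r * u := mul_pos hr h
      have hle : r * u ≤ (Real.exp 1)⁻¹ := le_trans (by nlinarith [hu.2]) hx'
      have hlog : Real.log (r * u) ≤ -1 := log_le_neg_one hru hle
      have hlogneg : Real.log (r * u) < 0 := by linarith
      have h1 : Real.log (r * u) * (Real.log (r * u))⁻¹ = 1 := mul_inv_cancel₀ hlogneg.ne
      have h2 : (Real.log (r * u))⁻¹ < 0 := inv_lt_zero.2 hlogneg
      nlinarith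

lemma runMin_mem {f : ℝ → ℝ} {T t : ℝ} (hf : ContinuousOn f (Set.Icc 0 T))
    (ht : t ∈ Set.Icc (0:ℝ) T) : runMin f t ∈ f '' Set.Icc (0:ℝ) t := by
  have hsub : Set.Icc (0:ℝ) t ⊆ Set.Icc 0 T := Set.Icc_subset_Icc le_rfl ht.2
  exact (isCompact_Icc.image_of_continuousOn (hf.mono hsub)).sInf_mem
    ⟨f 0, Set.mem_image_of_mem f (Set.left_mem_Icc.2 ht.1)⟩

lemma runMin_le {f : ℝ → ℝ} {T t s : ℝ} (hf : ContinuousOn f (Set.Icc 0 T))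
    (ht : t ∈ Set.Icc (0:ℝ) T) (hs : s ∈ Set.Icc (0:ℝ) t) : runMin f t ≤ f s := by
  have hsub : Set.Icc (0:ℝ) t ⊆ Set.Icc 0 T := Set.Icc_subset_Icc le_rfl ht.2
  exact csInf_le (isCompact_Icc.image_of_continuousOn (hf.mono hsub)).bddBelow
    (Set.mem_image_of_mem f hs)

lemma runMin_anti {f : ℝ → ℝ} {T s t : ℝ} (hf : ContinuousOn f (Set.Icc 0 T))
    (hs : 0 ≤ s) (hst : s ≤ t) (ht : t ∈ Set.Icc (0:ℝ) T) :
    runMin f t ≤ runMin f s := by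
  have hsub : Set.Icc (0:ℝ) t ⊆ Set.Icc 0 T := Set.Icc_subset_Icc le_rfl ht.2
  exact csInf_le_csInf (isCompact_Icc.image_of_continuousOn (hf.mono hsub)).bddBelow
    ⟨f 0, Set.mem_image_of_mem f (Set.left_mem_Icc.2 hs)⟩
    (Set.image_mono (Set.Icc_subset_Icc le_rfl hst))

lemma runMin_zero (f : ℝ → ℝ) : runMin f 0 = f 0 := by
  simp [runMin, Set.Icc_self]

/-- Example 6.4: the strategy additively generated by the iterated entropy
functional with running minimum is strong arbitrage relative to the market
over every horizon `[0,t]` with `T* ≤ t ≤ T`. -/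
theorem iterated_entropy_with_running_minimum_arbitrage
    (r T Tstar : ℝ) (hr : 0 < r) (hTstar : 0 < Tstar) (hTstarT : Tstar ≤ T)
    (d : ℕ) (hd : 1 ≤ d) (w : Fin d → ℝ → ℝ)
    (hw_cont : ∀ i, ContinuousOn (w i) (Set.Icc (0:ℝ) T))
    (hw_mem : ∀ i, ∀ t ∈ Set.Icc (0:ℝ) T, w i t ∈ Set.Ioc (0:ℝ) 1)
    (hw_sum : ∀ t ∈ Set.Icc (0:ℝ) T, ∑ i, w i t = 1)
    (hw_init : ∀ i, w i 0 ≤ 1 / (r * Real.exp 1))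
    (m : Fin d → ℝ → ℝ) (hm : ∀ i t, m i t = runMin (w i) t)
    (κ : ℝ) (hκ : κ = -1 - ∑ i, lir r (w i 0))
    (p : ℝ)
    (hp : p = -Real.log (⨆ i, (-(r * w i 0) * Real.log (r * w i 0))) + κ)
    (Γ : ℝ → ℝ)
    (hΓ : ∀ t, Γ t = ∑ i, (m i t - w i 0 + lir r (m i t) - lir r (w i 0)))
    (V : ℝ → ℝ)
    (hV : ∀ t, V t
      = -p - (∑ i, w i t * Real.log (-(r * m i t) * Real.log (r * m i t))) + Γ t)
    (harb : -Real.log (⨆ i, (-(r * m i Tstar) * Real.log (r * m i Tstar)))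
      > -(∑ i, w i 0 * Real.log (-(r * w i 0) * Real.log (r * w i 0))) - κ) :
    (∀ t ∈ Set.Icc (0:ℝ) T, 0 ≤ V t) ∧
      ∀ t ∈ Set.Icc Tstar T, V 0 < V t := by
  haveI : Nonempty (Fin d) := Fin.pos_iff_nonempty.1 hd
  have hT0 : (0:ℝ) ≤ T := le_trans hTstar.le hTstarT
  have h0mem : (0:ℝ) ∈ Set.Icc (0:ℝ) T := ⟨le_rfl, hT0⟩
  have hTsmem : Tstar ∈ Set.Icc (0:ℝ) T := ⟨hTstar.le, hTstarT⟩
  have hw0pos : ∀ i, 0 < w i 0 := fun i => (hw_mem i 0 h0mem).1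
  have hrw0 : ∀ i, r * w i 0 ≤ (Real.exp 1)⁻¹ := by
    intro i
    have h1 : r * (1 / (r * Real.exp 1)) = (Real.exp 1)⁻¹ := by
      field_simp
    calc r * w i 0 ≤ r * (1 / (r * Real.exp 1)) :=
          mul_le_mul_of_nonneg_left (hw_init i) hr.le
      _ = (Real.exp 1)⁻¹ := h1
  -- facts about m
  have hm_pos : ∀ i, ∀ t ∈ Set.Icc (0:ℝ) T, 0 < m i t := by
    intro i t ht
    rw [hm]
    obtain ⟨s, hs, heq⟩ := runMin_mem (hw_cont i) ht
    rw [← heq]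
    exact (hw_mem i s (Set.Icc_subset_Icc le_rfl ht.2 hs)).1
  have hm_le0 : ∀ i, ∀ t ∈ Set.Icc (0:ℝ) T, m i t ≤ w i 0 := by
    intro i t ht
    rw [hm]
    exact runMin_le (hw_cont i) ht (Set.left_mem_Icc.2 ht.1)
  have hm_zero : ∀ i, m i 0 = w i 0 := fun i => by rw [hm, runMin_zero]
  have hm_anti : ∀ i, ∀ s, 0 ≤ s → ∀ t, s ≤ t → t ∈ Set.Icc (0:ℝ) T → m i t ≤ m i s := by
    intro i s hs t hst ht
    rw [hm, hm]
    exact runMin_anti (hw_cont i) hs hst ht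
  have hrm : ∀ i, ∀ t ∈ Set.Icc (0:ℝ) T, r * m i t ≤ (Real.exp 1)⁻¹ := fun i t ht =>
    le_trans (mul_le_mul_of_nonneg_left (hm_le0 i t ht) hr.le) (hrw0 i)
  -- g t i and its positivity
  set g : ℝ → Fin d → ℝ := fun t i => -(r * m i t) * Real.log (r * m i t) with hg
  have hg_pos : ∀ t ∈ Set.Icc (0:ℝ) T, ∀ i, 0 < g t i := fun t ht i =>
    neg_mul_log_pos (mul_pos hr (hm_pos i t ht)) (hrm i t ht)
  have hg0 : ∀ i, g 0 i = -(r * w i 0) * Real.log (r * w i 0) := by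
    intro i; simp only [hg, hm_zero]
  have hg_mono : ∀ s, 0 ≤ s → ∀ t, s ≤ t → t ∈ Set.Icc (0:ℝ) T → s ∈ Set.Icc (0:ℝ) T →
      ∀ i, g t i ≤ g s i := by
    intro s hs t hst ht hsT i
    exact neg_mul_log_mono (mul_pos hr (hm_pos i t ht))
      (mul_le_mul_of_nonneg_left (hm_anti i s hs t hst ht) hr.le) (hrm i s hsT)
  have hbdd : ∀ t, BddAbove (Set.range (g t)) := fun t =>
    Set.Finite.bddAbove (Set.finite_range _)
  have hsup_pos : ∀ t ∈ Set.Icc (0:ℝ) T, 0 < ⨆ i, g t i := by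
    intro t ht
    exact lt_of_lt_of_le (hg_pos t ht (Classical.arbitrary _))
      (le_ciSup (hbdd t) _)
  -- sum bound : ∑ w i t * log (g t i) ≤ log (⨆ i, g t i)
  have hS : ∀ t ∈ Set.Icc (0:ℝ) T,
      (∑ i, w i t * Real.log (g t i)) ≤ Real.log (⨆ i, g t i) := by
    intro t ht
    have hlog : ∀ i, Real.log (g t i) ≤ Real.log (⨆ i, g t i) := fun i =>
      Real.log_le_log (hg_pos t ht i) (le_ciSup (hbdd t) i)
    calc (∑ i, w i t * Real.log (g t i))
        ≤ ∑ i, w i t * Real.log (⨆ i, g t i) :=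
          Finset.sum_le_sum fun i _ =>
            mul_le_mul_of_nonneg_left (hlog i) (hw_mem i t ht).1.le
      _ = (∑ i, w i t) * Real.log (⨆ i, g t i) := (Finset.sum_mul _ _ _).symm
      _ = Real.log (⨆ i, g t i) := by rw [hw_sum t ht, one_mul]
  -- sup comparison between times
  have hsup_le : ∀ s, 0 ≤ s → ∀ t, s ≤ t → t ∈ Set.Icc (0:ℝ) T → s ∈ Set.Icc (0:ℝ) T →
      (⨆ i, g t i) ≤ ⨆ i, g s i := by
    intro s hs t hst ht hsT
    exact ciSup_le fun i => le_trans (hg_mono s hs t hst ht hsT i) (le_ciSup (hbdd s) i)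
  -- Γ t - κ ≥ 0
  have hΓκ : ∀ t ∈ Set.Icc (0:ℝ) T, 0 ≤ Γ t - κ := by
    intro t ht
    have hsum0 := hw_sum 0 h0mem
    have key : Γ t - κ = ∑ i, (m i t + lir r (m i t)) := by
      rw [hΓ, hκ]
      have : ∀ i : Fin d, m i t + lir r (m i t)
          = (m i t - w i 0 + lir r (m i t) - lir r (w i 0)) + w i 0 + lir r (w i 0) := by
        intro i; ring
      rw [Finset.sum_congr rfl fun i _ => this i]
      rw [Finset.sum_add_distrib, Finset.sum_add_distrib, hsum0]
      ring
    rw [key]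
    refine Finset.sum_nonneg fun i _ => ?_
    have := lir_ge hr (hm_pos i t ht).le (hrm i t ht)
    linarith
  -- -p = log(sup g 0) - κ
  have hsup0eq : (⨆ i, g 0 i) = ⨆ i, (-(r * w i 0) * Real.log (r * w i 0)) := by
    exact iSup_congr hg0
  have hp' : -p = Real.log (⨆ i, g 0 i) - κ := by
    rw [hp, hsup0eq]; ring
  constructor
  · intro t ht
    rw [hV]
    have h1 : (∑ i, w i t * Real.log (-(r * m i t) * Real.log (r * m i t)))
        ≤ Real.log (⨆ i, g t i) := hS t ht
    have h2 : Real.log (⨆ i, g t i) ≤ Real.log (⨆ i, g 0 i) :=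
      Real.log_le_log (hsup_pos t ht) (hsup_le 0 le_rfl t ht.1 ht h0mem)
    have h3 := hΓκ t ht
    rw [hp']
    linarith
  · intro t ht
    have htT : t ∈ Set.Icc (0:ℝ) T := ⟨le_trans hTstar.le ht.1, ht.2⟩
    -- V 0
    have hΓ0 : Γ 0 = 0 := by
      rw [hΓ]
      exact Finset.sum_eq_zero fun i _ => by rw [hm_zero]; ring
    have hV0 : V 0 = -p - (∑ i, w i 0 * Real.log (-(r * w i 0) * Real.log (r * w i 0))) := by
      rw [hV, hΓ0, add_zero]
      congr 1
      exact Finset.sum_congr rfl fun i _ => by rw [hm_zero]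
    have h1 : (∑ i, w i t * Real.log (-(r * m i t) * Real.log (r * m i t)))
        ≤ Real.log (⨆ i, g t i) := hS t htT
    have h2 : Real.log (⨆ i, g t i) ≤ Real.log (⨆ i, g Tstar i) :=
      Real.log_le_log (hsup_pos t htT) (hsup_le Tstar hTstar.le t ht.1 htT hTsmem)
    have h3 := hΓκ t htT
    have harb' : -Real.log (⨆ i, g Tstar i)
        > -(∑ i, w i 0 * Real.log (-(r * w i 0) * Real.log (r * w i 0))) - κ := harb
    rw [hV t, hV0]
    linarith
end
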